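/- Let X be a complex Banach space and f a ∂̄-closed (0,1)-form of class C^{m} with finite C^m norm on the unit ball B of X, m ≥ 1. Suppose u_n are continuous functions on B with sup_B |u_n| and sup-norms of ∂̄u_n uniformly bounded, and ∂̄u_n = f on the slice B ∩ E_n for an increasing exhausting sequence of finite dimensional subspaces E_n. Then the family (u_n∘ρ_n), with ρ_n projections onto E_n of norm 1, is locally equicontinuous on B (via the Cauchy–Pompeiu formula applied to one-dimensional slices). -/

import Mathlib

open Filter
open scoped Topology

open MeasureTheory Metric Complex Set

lemma abs_rpow_half_int (R : ℝ) :
    IntegrableOn (fun t : ℝ => |t| ^ (-(1/2) : ℝ)) (Icc (-R) R) volume := by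
  have h0 : ∀ S : ℝ, IntegrableOn (fun t : ℝ => |t| ^ (-(1/2) : ℝ)) (Ioc 0 S) volume := by
    intro S
    have h1 : IntervalIntegrable (fun x : ℝ => x ^ (-(1/2) : ℝ)) volume 0 S := by
      apply intervalIntegral.intervalIntegrable_rpow' (by norm_num)
    rcases le_or_gt 0 S with hS | hS
    · have h2 := (intervalIntegrable_iff_integrableOn_Ioc_of_le hS).1 h1
      apply h2.congr_fun ?_ measurableSet_Ioc
      intro x hx
      simp only [abs_of_pos hx.1]
    · rw [Ioc_eq_empty (by linarith)]
      exact integrableOn_empty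
  have hneg : IntegrableOn (fun t : ℝ => |t| ^ (-(1/2) : ℝ)) (Ico (-R) 0) volume := by
    have h3 := ((Measure.measurePreserving_neg (volume : Measure ℝ)).integrableOn_comp_preimage
      (Homeomorph.neg ℝ).measurableEmbedding (f := fun t : ℝ => |t| ^ (-(1/2) : ℝ))
      (s := Ioc 0 R)).2 (h0 R)
    have hpre : (Neg.neg ⁻¹' Ioc (0:ℝ) R) = Ico (-R) 0 := by
      ext x
      simp only [mem_preimage, mem_Ioc, mem_Ico]
      constructor
      · rintro ⟨h1, h2⟩
        exact ⟨by linarith, by linarith⟩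
      · rintro ⟨h1, h2⟩
        exact ⟨by linarith, by linarith⟩
    rw [hpre] at h3
    apply h3.congr_fun ?_ measurableSet_Ico
    intro x hx
    simp [Function.comp, abs_neg]
  have hsub : Icc (-R) R ⊆ Ico (-R) 0 ∪ Ioc 0 R ∪ {0} := by
    intro x hx
    rcases lt_trichotomy x 0 with h | h | h
    · exact Or.inl (Or.inl ⟨hx.1, h⟩)
    · exact Or.inr (by simp [h])
    · exact Or.inl (Or.inr ⟨h, hx.2⟩)
  exact (((hneg.union (h0 R)).union ((integrableOn_singleton_iff).2
    (Or.inl (by simp)))).mono_set hsub)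

lemma kernel_integrable (R : ℝ) :
    IntegrableOn (fun η : ℂ => ‖η‖⁻¹) (closedBall (0:ℂ) R) volume := by
  set e := Complex.measurableEquivRealProd with he
  rw [← (Complex.volume_preserving_equiv_real_prod.symm).integrableOn_comp_preimage
    (MeasurableEquiv.measurableEmbedding _)]
  have hnorm : ∀ p : ℝ × ℝ, ‖e.symm p‖ = Real.sqrt (p.1^2 + p.2^2) := by
    intro p
    have h1 : (e.symm p).re = p.1 := rfl
    have h2 : (e.symm p).im = p.2 := rfl
    rw [Complex.norm_def, Complex.normSq_apply, h1, h2]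
    ring_nf
  have hsub : (e.symm ⁻¹' closedBall (0:ℂ) R) ⊆ (Icc (-R) R) ×ˢ (Icc (-R) R) := by
    intro p hp
    simp only [mem_preimage, mem_closedBall, Complex.dist_eq, sub_zero] at hp
    have h1 : ‖e.symm p‖ ≤ R := by exact hp
    have hre : |p.1| ≤ R := by
      have h := Complex.abs_re_le_norm (e.symm p)
      have hre' : (e.symm p).re = p.1 := rfl
      rw [hre'] at h
      exact h.trans hp
    have him : |p.2| ≤ R := by
      have h := Complex.abs_im_le_norm (e.symm p)
      have him' : (e.symm p).im = p.2 := rfl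
      rw [him'] at h
      exact h.trans hp
    exact ⟨⟨neg_le_of_abs_le hre, le_of_abs_le hre⟩, ⟨neg_le_of_abs_le him, le_of_abs_le him⟩⟩
  apply IntegrableOn.mono_set ?_ hsub
  have hprod : IntegrableOn (fun p : ℝ × ℝ => |p.1| ^ (-(1/2):ℝ) * |p.2| ^ (-(1/2):ℝ))
      ((Icc (-R) R) ×ˢ (Icc (-R) R)) volume := by
    rw [IntegrableOn, Measure.volume_eq_prod, ← Measure.prod_restrict]
    exact (abs_rpow_half_int R).mul_prod (abs_rpow_half_int R)
  apply Integrable.mono' hprod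
  · exact (((measurable_norm.comp e.symm.measurable)).inv).aestronglyMeasurable
  · apply ae_restrict_of_ae
    have hax : ∀ᵐ p : ℝ × ℝ, p.1 ≠ 0 ∧ p.2 ≠ 0 := by
      rw [ae_iff]
      have hset : {p : ℝ × ℝ | ¬(p.1 ≠ 0 ∧ p.2 ≠ 0)} ⊆ {p : ℝ × ℝ | p.1 = 0} ∪ {p | p.2 = 0} := by
        intro p hp
        simp only [mem_setOf_eq, not_and_or, not_not] at hp
        exact hp
      have h1 : (volume : Measure (ℝ × ℝ)) {p | p.1 = 0} = 0 := by
        have hs : {p : ℝ × ℝ | p.1 = 0} = ({0} : Set ℝ) ×ˢ (univ : Set ℝ) := by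
          ext p
          simp only [mem_setOf_eq, Set.mem_prod, mem_singleton_iff, mem_univ, and_true]
        rw [hs, Measure.volume_eq_prod, Measure.prod_prod]
        simp
      have h2 : (volume : Measure (ℝ × ℝ)) {p | p.2 = 0} = 0 := by
        have hs : {p : ℝ × ℝ | p.2 = 0} = (univ : Set ℝ) ×ˢ ({0} : Set ℝ) := by
          ext p
          simp only [mem_setOf_eq, Set.mem_prod, mem_singleton_iff, mem_univ, true_and]
        rw [hs, Measure.volume_eq_prod, Measure.prod_prod]
        simp
      exact le_antisymm (le_trans (measure_mono hset) (measure_union_null h1 h2).le) (zero_le)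
    filter_upwards [hax] with p hp
    obtain ⟨ha, hb⟩ := hp
    have hkey : |p.1| ^ ((1/2):ℝ) * |p.2| ^ ((1/2):ℝ) ≤ ‖e.symm p‖ := by
      rw [hnorm p]
      have e1 : |p.1| ^ ((1/2):ℝ) = Real.sqrt |p.1| := by rw [Real.sqrt_eq_rpow]
      have e2 : |p.2| ^ ((1/2):ℝ) = Real.sqrt |p.2| := by rw [Real.sqrt_eq_rpow]
      rw [e1, e2, ← Real.sqrt_mul (abs_nonneg _)]
      apply Real.sqrt_le_sqrt
      have := abs_mul p.1 p.2
      nlinarith [sq_nonneg (|p.1| - |p.2|), abs_nonneg p.1, abs_nonneg p.2,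
        _root_.sq_abs p.1, _root_.sq_abs p.2, abs_nonneg (p.1*p.2)]
    have hpos : 0 < |p.1| ^ ((1/2):ℝ) * |p.2| ^ ((1/2):ℝ) := by
      apply mul_pos <;> exact Real.rpow_pos_of_pos (abs_pos.2 (by assumption)) _
    have : ‖e.symm p‖⁻¹ ≤ (|p.1| ^ ((1/2):ℝ) * |p.2| ^ ((1/2):ℝ))⁻¹ := by
      apply inv_anti₀ hpos hkey
    calc ‖((fun η : ℂ => ‖η‖⁻¹) ∘ e.symm) p‖ = ‖e.symm p‖⁻¹ := by
          simp [Function.comp, _root_.abs_of_nonneg (inv_nonneg.2 (norm_nonneg _))]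
      _ ≤ (|p.1| ^ ((1/2):ℝ) * |p.2| ^ ((1/2):ℝ))⁻¹ := this
      _ = |p.1| ^ (-(1/2):ℝ) * |p.2| ^ (-(1/2):ℝ) := by
          rw [mul_inv, ← Real.rpow_neg (abs_nonneg _), ← Real.rpow_neg (abs_nonneg _)]

lemma exp_theta_I_norm (θ : ℝ) : ‖Complex.exp ((θ:ℂ) * Complex.I)‖ = 1 := by
  rw [Complex.norm_exp]
  simp

lemma cr_polar_identity (A : ℂ →L[ℝ] ℂ) (θ : ℝ) :
    (A 1 + Complex.I * A Complex.I) * Complex.exp (-(θ:ℂ) * Complex.I)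
      = A (Complex.exp ((θ:ℂ) * Complex.I))
        + Complex.I * A (Complex.I * Complex.exp ((θ:ℂ) * Complex.I)) := by
  have h1 : Complex.exp ((θ:ℂ) * Complex.I)
      = (Real.cos θ : ℝ) • (1:ℂ) + (Real.sin θ : ℝ) • (Complex.I) := by
    rw [Complex.exp_mul_I]
    simp [Complex.real_smul, Complex.ofReal_cos, Complex.ofReal_sin]
  have h2 : Complex.I * Complex.exp ((θ:ℂ) * Complex.I)
      = (-Real.sin θ : ℝ) • (1:ℂ) + (Real.cos θ : ℝ) • (Complex.I) := by
    rw [Complex.exp_mul_I]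
    simp only [Complex.real_smul, Complex.ofReal_cos, Complex.ofReal_sin, Complex.ofReal_neg]
    ring_nf
    rw [Complex.I_sq]
    ring
  have h3 : Complex.exp (-(θ:ℂ) * Complex.I)
      = (Real.cos θ : ℂ) - (Real.sin θ : ℂ) * Complex.I := by
    rw [Complex.exp_mul_I]
    simp [Complex.cos_neg, Complex.sin_neg, Complex.ofReal_cos, Complex.ofReal_sin, sub_eq_add_neg]
  rw [h2, h1, h3, A.map_add, A.map_add, A.map_smul, A.map_smul, A.map_smul, A.map_smul]
  simp only [Complex.real_smul, Complex.ofReal_neg]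
  ring_nf
  rw [Complex.I_sq]
  ring

/-- Cauchy–Pompeiu formula for compactly supported C¹ functions on ℂ. -/
lemma pompeiu (ψ : ℂ → ℂ) (hψ : ContDiff ℝ 1 ψ) (r' : ℝ) (hr' : 0 < r')
    (hvan : ∀ w : ℂ, r' ≤ ‖w‖ → ψ w = 0) (z : ℂ) :
    ∫ η : ℂ, (fderiv ℝ ψ (z + η) 1 + Complex.I * fderiv ℝ ψ (z + η) Complex.I) * η⁻¹
      = (-(2 * Real.pi) : ℝ) • ψ z := by
  have hdiff : ∀ w : ℂ, DifferentiableAt ℝ ψ w :=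
    fun w => (hψ.differentiable one_ne_zero) w
  have hcont : Continuous (fderiv ℝ ψ) := hψ.continuous_fderiv one_ne_zero
  -- derivative vanishes where norm is large
  have hD0 : ∀ w : ℂ, r' < ‖w‖ → fderiv ℝ ψ w = 0 := by
    intro w hw
    have hopen : IsOpen {v : ℂ | r' < ‖v‖} := isOpen_lt continuous_const continuous_norm
    have hev : ψ =ᶠ[nhds w] (fun _ => (0:ℂ)) := by
      filter_upwards [hopen.mem_nhds hw] with v hv
      exact hvan v (le_of_lt hv)
    rw [hev.fderiv_eq, fderiv_const_apply]
  -- global bound on the derivative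
  obtain ⟨Mq, hMq0, hMq⟩ : ∃ Mq : ℝ, 0 ≤ Mq ∧ ∀ w : ℂ, ‖fderiv ℝ ψ w‖ ≤ Mq := by
    obtain ⟨B, hB⟩ := (isCompact_closedBall (0:ℂ) r').exists_bound_of_continuousOn
      hcont.continuousOn
    refine ⟨max B 0, le_max_right _ _, fun w => ?_⟩
    rcases le_or_gt ‖w‖ r' with h | h
    · exact le_trans (hB w (by simpa [mem_closedBall, Complex.dist_eq, sub_zero] using h)) (le_max_left _ _)
    · rw [hD0 w h]
      simp
  set R₀ : ℝ := r' + ‖z‖ with hR₀def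
  have hR₀ : 0 < R₀ := by positivity
  set q : ℂ → ℂ := fun w => fderiv ℝ ψ w 1 + Complex.I * fderiv ℝ ψ w Complex.I with hq
  have hqcont : Continuous q := by
    apply Continuous.add
    · exact hcont.clm_apply continuous_const
    · exact continuous_const.mul (hcont.clm_apply continuous_const)
  have hq0 : ∀ w : ℂ, r' < ‖w‖ → q w = 0 := by
    intro w hw
    simp [hq, hD0 w hw]
  have hqb : ∀ w : ℂ, ‖q w‖ ≤ 2 * Mq := by
    intro w
    have h1 : ‖fderiv ℝ ψ w 1‖ ≤ Mq := by
      calc ‖fderiv ℝ ψ w 1‖ ≤ ‖fderiv ℝ ψ w‖ * ‖(1:ℂ)‖ := (fderiv ℝ ψ w).le_opNorm 1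
        _ ≤ Mq := by simpa using hMq w
    have h2 : ‖fderiv ℝ ψ w Complex.I‖ ≤ Mq := by
      calc ‖fderiv ℝ ψ w Complex.I‖ ≤ ‖fderiv ℝ ψ w‖ * ‖Complex.I‖ := (fderiv ℝ ψ w).le_opNorm _
        _ ≤ Mq := by simpa using hMq w
    calc ‖q w‖ ≤ ‖fderiv ℝ ψ w 1‖ + ‖Complex.I * fderiv ℝ ψ w Complex.I‖ := norm_add_le _ _
      _ ≤ Mq + Mq := by
          apply add_le_add h1
          rw [norm_mul, Complex.norm_I, one_mul]
          exact h2
      _ = 2 * Mq := by ring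
  -- the polar-coordinate integrands
  set w : ℝ × ℝ → ℂ := fun p => z + (p.1 : ℂ) * Complex.exp ((p.2 : ℂ) * Complex.I) with hw
  set W₁ : ℝ × ℝ → ℂ := fun p =>
    fderiv ℝ ψ (w p) (Complex.exp ((p.2:ℂ) * Complex.I)) with hW₁
  set W₂ : ℝ × ℝ → ℂ := fun p =>
    Complex.I * fderiv ℝ ψ (w p) (Complex.I * Complex.exp ((p.2:ℂ) * Complex.I)) with hW₂
  set W : ℝ × ℝ → ℂ := fun p => q (w p) * Complex.exp (-(p.2:ℂ) * Complex.I) with hWdef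
  have hwcont : Continuous w := by
    apply continuous_const.add
    exact (Complex.continuous_ofReal.comp continuous_fst).mul
      (Complex.continuous_exp.comp ((Complex.continuous_ofReal.comp continuous_snd).mul
        continuous_const))
  have hWsum : ∀ p, W p = W₁ p + W₂ p := fun p => cr_polar_identity (fderiv ℝ ψ (w p)) p.2
  have hwnorm : ∀ p : ℝ × ℝ, R₀ < p.1 → r' < ‖w p‖ := by
    intro p hp
    have h1 : ‖(p.1 : ℂ) * Complex.exp ((p.2:ℂ) * Complex.I)‖ = |p.1| := by
      rw [norm_mul, exp_theta_I_norm, mul_one, Complex.norm_real, Real.norm_eq_abs]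
    have h3 : ‖(p.1:ℂ) * Complex.exp ((p.2:ℂ)*Complex.I)‖ ≤ ‖w p‖ + ‖z‖ := by
      have heq : (p.1:ℂ) * Complex.exp ((p.2:ℂ)*Complex.I) = w p - z := by
        rw [hw]; ring
      rw [heq]
      exact norm_sub_le _ _
    rw [h1] at h3
    have h4 : p.1 ≤ |p.1| := le_abs_self _
    rw [hR₀def] at hp
    linarith
  -- integrability helper on the polar target
  have htgt : polarCoord.target = Set.Ioi (0:ℝ) ×ˢ Set.Ioo (-Real.pi) Real.pi := rfl
  have hmeas_tgt : MeasurableSet polarCoord.target := polarCoord.open_target.measurableSet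
  have hIntHelp : ∀ (V : ℝ × ℝ → ℂ) (B : ℝ), Continuous V → (∀ p, ‖V p‖ ≤ B) →
      (∀ p : ℝ × ℝ, R₀ < p.1 → V p = 0) → IntegrableOn V polarCoord.target volume := by
    intro V B hVc hVb hV0
    rw [htgt, ← Set.Ioc_union_Ioi_eq_Ioi hR₀.le, Set.union_prod]
    apply IntegrableOn.union
    · apply Measure.integrableOn_of_bounded (M := B)
      · rw [Measure.volume_eq_prod, Measure.prod_prod, Real.volume_Ioc, Real.volume_Ioo]
        exact ENNReal.mul_ne_top ENNReal.ofReal_ne_top ENNReal.ofReal_ne_top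
      · exact hVc.aestronglyMeasurable
      · exact Filter.Eventually.of_forall hVb
    · have h0 : EqOn (fun _ => (0:ℂ)) V (Set.Ioi R₀ ×ˢ Set.Ioo (-Real.pi) Real.pi) := by
        intro p hp
        exact (hV0 p hp.1).symm
      exact (integrableOn_zero).congr_fun h0 (measurableSet_Ioi.prod measurableSet_Ioo)
  have hW₁c : Continuous W₁ := by
    apply Continuous.clm_apply (hcont.comp hwcont)
    exact Complex.continuous_exp.comp ((Complex.continuous_ofReal.comp continuous_snd).mul
      continuous_const)
  have hW₂c : Continuous W₂ := by
    apply continuous_const.mul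
    apply Continuous.clm_apply (hcont.comp hwcont)
    exact continuous_const.mul (Complex.continuous_exp.comp
      ((Complex.continuous_ofReal.comp continuous_snd).mul continuous_const))
  have hWc : Continuous W := by
    apply (hqcont.comp hwcont).mul
    exact Complex.continuous_exp.comp ((Complex.continuous_ofReal.comp continuous_snd).neg.mul
      continuous_const)
  have hW₁b : ∀ p, ‖W₁ p‖ ≤ Mq := by
    intro p
    calc ‖W₁ p‖ ≤ ‖fderiv ℝ ψ (w p)‖ * ‖Complex.exp ((p.2:ℂ) * Complex.I)‖ :=
          (fderiv ℝ ψ (w p)).le_opNorm _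
      _ ≤ Mq := by rw [exp_theta_I_norm]; simpa using hMq (w p)
  have hW₂b : ∀ p, ‖W₂ p‖ ≤ Mq := by
    intro p
    rw [hW₂]
    simp only [norm_mul, Complex.norm_I, one_mul]
    calc ‖fderiv ℝ ψ (w p) (Complex.I * Complex.exp ((p.2:ℂ) * Complex.I))‖
        ≤ ‖fderiv ℝ ψ (w p)‖ * ‖Complex.I * Complex.exp ((p.2:ℂ) * Complex.I)‖ :=
          (fderiv ℝ ψ (w p)).le_opNorm _
      _ ≤ Mq := by
          rw [norm_mul, Complex.norm_I, one_mul, exp_theta_I_norm]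
          simpa using hMq (w p)
  have hWb : ∀ p, ‖W p‖ ≤ 2 * Mq := by
    intro p
    rw [hWdef]
    simp only [norm_mul]
    have hexp : ‖Complex.exp (-(p.2:ℂ) * Complex.I)‖ = 1 := by
      have : (-(p.2:ℂ)) = ((-p.2 : ℝ) : ℂ) := by push_cast; ring
      rw [this, exp_theta_I_norm]
    rw [hexp, mul_one]
    exact hqb _
  have hW₁0 : ∀ p : ℝ × ℝ, R₀ < p.1 → W₁ p = 0 := by
    intro p hp
    have h0 := hD0 _ (hwnorm p hp)
    simp only [hW₁, h0]
    simp
  have hW₂0 : ∀ p : ℝ × ℝ, R₀ < p.1 → W₂ p = 0 := by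
    intro p hp
    have h0 := hD0 _ (hwnorm p hp)
    simp only [hW₂, h0]
    simp
  have hW0 : ∀ p : ℝ × ℝ, R₀ < p.1 → W p = 0 := by
    intro p hp
    have h0 := hq0 _ (hwnorm p hp)
    simp only [hWdef, h0]
    simp
  have hW₁int : IntegrableOn W₁ polarCoord.target volume := hIntHelp W₁ Mq hW₁c hW₁b hW₁0
  have hW₂int : IntegrableOn W₂ polarCoord.target volume := hIntHelp W₂ Mq hW₂c hW₂b hW₂0
  have hWint : IntegrableOn W polarCoord.target volume := hIntHelp W (2*Mq) hWc hWb hW0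
  -- Claim A : polar change of variables
  have hpolar : (∫ η : ℂ, q (z + η) * η⁻¹) = ∫ p in polarCoord.target, W p := by
    rw [← Complex.integral_comp_polarCoord_symm (fun η => q (z + η) * η⁻¹)]
    apply setIntegral_congr_fun hmeas_tgt
    intro p hp
    rw [htgt] at hp
    have hp1 : 0 < p.1 := hp.1
    have hsymm : (Complex.polarCoord.symm p : ℂ) = (p.1:ℂ) * Complex.exp ((p.2:ℂ) * Complex.I) := by
      rw [Complex.polarCoord_symm_apply, Complex.exp_mul_I]
      norm_cast
    have hne : ((p.1 : ℂ)) ≠ 0 := Complex.ofReal_ne_zero.2 (ne_of_gt hp1)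
    have hexpne : Complex.exp ((p.2:ℂ) * Complex.I) ≠ 0 := Complex.exp_ne_zero _
    show p.1 • (q (z + Complex.polarCoord.symm p) * (Complex.polarCoord.symm p : ℂ)⁻¹) = W p
    rw [hsymm]
    rw [Complex.real_smul]
    rw [hWdef]
    simp only []
    rw [mul_inv]
    have hinv : (Complex.exp ((p.2:ℂ) * Complex.I))⁻¹ = Complex.exp (-(p.2:ℂ) * Complex.I) := by
      rw [neg_mul, Complex.exp_neg]
    rw [hinv, hw]
    field_simp
  -- Claim C : split the integral
  have hsplit : ∫ p in polarCoord.target, W p =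
      (∫ p in polarCoord.target, W₁ p) + ∫ p in polarCoord.target, W₂ p := by
    rw [setIntegral_congr_fun hmeas_tgt (g := fun p => W₁ p + W₂ p) (fun p _ => hWsum p)]
    exact integral_add hW₁int hW₂int
  -- Claim D : the angular-derivative part vanishes
  have hD : ∫ p in polarCoord.target, W₂ p = 0 := by
    rw [htgt, Measure.volume_eq_prod, setIntegral_prod _ ?hint]
    case hint =>
      rw [← Measure.volume_eq_prod, ← htgt]
      exact hW₂int
    rw [setIntegral_congr_fun measurableSet_Ioi (g := fun _ => (0:ℂ)) ?hzero, integral_zero]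
    intro r hr
    have hr0 : 0 < r := hr
    have hrne : ((r:ℂ)) ≠ 0 := Complex.ofReal_ne_zero.2 (ne_of_gt hr0)
    -- FTC in θ
    set F : ℝ → ℂ := fun θ => ψ (z + (r:ℂ) * Complex.exp ((θ:ℂ) * Complex.I)) with hF
    set F' : ℝ → ℂ := fun θ =>
      fderiv ℝ ψ (z + (r:ℂ) * Complex.exp ((θ:ℂ) * Complex.I))
        ((r:ℂ) * (Complex.exp ((θ:ℂ) * Complex.I) * Complex.I)) with hF'
    have hderiv : ∀ θ : ℝ, HasDerivAt F (F' θ) θ := by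
      intro θ
      have h1 : HasDerivAt (fun θ : ℝ => (θ:ℂ)) 1 θ := by
        simpa using (hasDerivAt_id _).ofReal_comp
      have h2 := h1.mul_const Complex.I
      have h3 := h2.cexp
      have h4 := (h3.const_mul (r:ℂ)).const_add z
      have h5 := ((hdiff _).hasFDerivAt).comp_hasDerivAt θ h4
      rw [hF, hF']
      exact h5.congr_deriv (congrArg (fderiv ℝ ψ _) (by ring))
    have hF'cont : Continuous F' := by
      apply Continuous.clm_apply
      · apply hcont.comp
        exact continuous_const.add (continuous_const.mul (Complex.continuous_exp.comp
          (Complex.continuous_ofReal.mul continuous_const)))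
      · exact continuous_const.mul ((Complex.continuous_exp.comp
          (Complex.continuous_ofReal.mul continuous_const)).mul continuous_const)
    have hFTC : ∫ θ in Set.Ioo (-Real.pi) Real.pi, F' θ = F Real.pi - F (-Real.pi) := by
      rw [← integral_Ioc_eq_integral_Ioo,
        ← intervalIntegral.integral_of_le (by linarith [Real.pi_pos])]
      exact intervalIntegral.integral_eq_sub_of_hasDerivAt (fun θ _ => hderiv θ)
        (hF'cont.intervalIntegrable _ _)
    have hFval : F Real.pi - F (-Real.pi) = 0 := by
      rw [hF]
      simp only []
      have he1 : Complex.exp (((Real.pi:ℝ):ℂ) * Complex.I) = -1 := Complex.exp_pi_mul_I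
      have he2 : Complex.exp ((((-Real.pi):ℝ):ℂ) * Complex.I) = -1 := by
        push_cast
        rw [neg_mul, Complex.exp_neg, Complex.exp_pi_mul_I]
        norm_num
      rw [he1, he2, sub_self]
    have hW₂F' : ∀ θ : ℝ, W₂ (r, θ) = (Complex.I * (r:ℂ)⁻¹) * F' θ := by
      intro θ
      rw [hW₂, hF']
      simp only []
      have harg : ((r:ℂ) * (Complex.exp ((θ:ℂ) * Complex.I) * Complex.I))
          = r • (Complex.exp ((θ:ℂ) * Complex.I) * Complex.I) := by
        rw [Complex.real_smul]
      rw [harg, ContinuousLinearMap.map_smul, Complex.real_smul]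
      have hcomm : Complex.exp ((θ:ℂ) * Complex.I) * Complex.I
          = Complex.I * Complex.exp ((θ:ℂ) * Complex.I) := mul_comm _ _
      rw [hcomm, hw]
      simp only []
      field_simp
    calc ∫ θ in Set.Ioo (-Real.pi) Real.pi, W₂ (r, θ)
        = ∫ θ in Set.Ioo (-Real.pi) Real.pi, (Complex.I * (r:ℂ)⁻¹) * F' θ := by
          apply setIntegral_congr_fun measurableSet_Ioo
          intro θ _
          exact hW₂F' θ
      _ = (Complex.I * (r:ℂ)⁻¹) * ∫ θ in Set.Ioo (-Real.pi) Real.pi, F' θ := by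
          rw [integral_const_mul]
      _ = 0 := by rw [hFTC, hFval, mul_zero]
  -- Claim E : the radial-derivative part
  have hE : ∫ p in polarCoord.target, W₁ p = (-(2 * Real.pi) : ℝ) • ψ z := by
    have hswap : ∫ p in polarCoord.target, W₁ p
        = ∫ p in (Set.Ioo (-Real.pi) Real.pi) ×ˢ (Set.Ioi (0:ℝ)), W₁ (p.2, p.1) := by
      rw [htgt, Measure.volume_eq_prod, ← Measure.prod_restrict, ← integral_prod_swap W₁,
        Measure.prod_restrict, ← Measure.volume_eq_prod]
      rfl
    have hVint : IntegrableOn (fun p : ℝ × ℝ => W₁ (p.2, p.1))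
        ((Set.Ioo (-Real.pi) Real.pi) ×ˢ (Set.Ioi (0:ℝ))) volume := by
      have h1 : Integrable W₁ (((volume : Measure ℝ).restrict (Set.Ioi (0:ℝ))).prod
          ((volume : Measure ℝ).restrict (Set.Ioo (-Real.pi) Real.pi))) := by
        rw [Measure.prod_restrict, ← Measure.volume_eq_prod]
        exact hW₁int
      have h2 := h1.swap
      rw [Measure.prod_restrict, ← Measure.volume_eq_prod] at h2
      exact h2
    rw [hswap, Measure.volume_eq_prod, setIntegral_prod _ ?hint2]
    case hint2 =>
      rw [← Measure.volume_eq_prod]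
      exact hVint
    -- inner integral over r is -ψ z for each θ
    have hinner : ∀ θ : ℝ, θ ∈ Set.Ioo (-Real.pi) Real.pi →
        ∫ r in Set.Ioi (0:ℝ), W₁ (r, θ) = -ψ z := by
      intro θ _
      set G : ℝ → ℂ := fun r => ψ (z + (r:ℂ) * Complex.exp ((θ:ℂ) * Complex.I)) with hG
      set G' : ℝ → ℂ := fun r =>
        fderiv ℝ ψ (z + (r:ℂ) * Complex.exp ((θ:ℂ) * Complex.I))
          (Complex.exp ((θ:ℂ) * Complex.I)) with hG'
      have hWG : ∀ r : ℝ, W₁ (r, θ) = G' r := by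
        intro r
        rw [hW₁, hG', hw]
      have hderiv : ∀ r : ℝ, HasDerivAt G (G' r) r := by
        intro r
        have h1 : HasDerivAt (fun r : ℝ => (r:ℂ)) 1 r := by
          simpa using (hasDerivAt_id _).ofReal_comp
        have h2 := h1.mul_const (Complex.exp ((θ:ℂ) * Complex.I))
        have h3 := h2.const_add z
        have h4 := ((hdiff _).hasFDerivAt).comp_hasDerivAt r h3
        rw [hG, hG']
        exact h4.congr_deriv (congrArg (fderiv ℝ ψ _) (by ring))
      have hG'cont : Continuous G' := by
        apply Continuous.clm_apply ?_ continuous_const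
        apply hcont.comp
        exact continuous_const.add ((Complex.continuous_ofReal).mul continuous_const)
      have hG'0 : ∀ r : ℝ, R₀ < r → G' r = 0 := by
        intro r hr
        have h0 : r' < ‖z + (r:ℂ) * Complex.exp ((θ:ℂ) * Complex.I)‖ := by
          have := hwnorm (r, θ) hr
          simpa [hw] using this
        have h1 := hD0 _ h0
        simp only [hG', h1]
        simp
      have hsplit2 : ∫ r in Set.Ioi (0:ℝ), G' r
          = (∫ r in Set.Ioc (0:ℝ) R₀, G' r) + ∫ r in Set.Ioi R₀, G' r := by
        rw [← setIntegral_union (Set.Ioc_disjoint_Ioi le_rfl) measurableSet_Ioi]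
        · rw [Set.Ioc_union_Ioi_eq_Ioi hR₀.le]
        · exact (hG'cont.integrableOn_Icc).mono_set Set.Ioc_subset_Icc_self
        · apply (integrableOn_zero).congr_fun ?_ measurableSet_Ioi
          intro r hr
          exact (hG'0 r hr).symm
      have hIoi0 : ∫ r in Set.Ioi R₀, G' r = 0 := by
        rw [setIntegral_congr_fun measurableSet_Ioi (g := fun _ => (0:ℂ)) ?_, integral_zero]
        intro r hr
        exact hG'0 r hr
      have hIoc : ∫ r in Set.Ioc (0:ℝ) R₀, G' r = -ψ z := by
        rw [← intervalIntegral.integral_of_le hR₀.le]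
        rw [intervalIntegral.integral_eq_sub_of_hasDerivAt (fun r _ => hderiv r)
          (hG'cont.intervalIntegrable _ _)]
        have hGR : G R₀ = 0 := by
          rw [hG]
          apply hvan
          have h1 : ‖(R₀:ℂ) * Complex.exp ((θ:ℂ) * Complex.I)‖ = R₀ := by
            rw [norm_mul, exp_theta_I_norm, mul_one, Complex.norm_real, Real.norm_eq_abs,
              abs_of_pos hR₀]
          have h2 : ‖(R₀:ℂ) * Complex.exp ((θ:ℂ) * Complex.I)‖
              ≤ ‖z + (R₀:ℂ) * Complex.exp ((θ:ℂ) * Complex.I)‖ + ‖z‖ := by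
            have h2' := norm_sub_le (z + (R₀:ℂ) * Complex.exp ((θ:ℂ) * Complex.I)) z
            simpa using h2'
          rw [h1] at h2
          rw [hR₀def] at h2
          linarith
        have hG0 : G 0 = ψ z := by
          rw [hG]
          norm_num
        rw [hGR, hG0]
        ring
      calc ∫ r in Set.Ioi (0:ℝ), W₁ (r, θ) = ∫ r in Set.Ioi (0:ℝ), G' r := by
            apply setIntegral_congr_fun measurableSet_Ioi
            intro r _
            exact hWG r
        _ = -ψ z := by rw [hsplit2, hIoi0, hIoc, add_zero]
    rw [setIntegral_congr_fun measurableSet_Ioo (g := fun _ => -ψ z) hinner]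
    rw [setIntegral_const, Real.volume_real_Ioo_of_le (by linarith [Real.pi_pos])]
    have : (Real.pi - -Real.pi) = 2 * Real.pi := by ring
    rw [this]
    rw [smul_neg, neg_smul]
  -- assemble
  calc ∫ η : ℂ, (fderiv ℝ ψ (z + η) 1 + Complex.I * fderiv ℝ ψ (z + η) Complex.I) * η⁻¹
      = ∫ η : ℂ, q (z + η) * η⁻¹ := rfl
    _ = ∫ p in polarCoord.target, W p := hpolar
    _ = (∫ p in polarCoord.target, W₁ p) + ∫ p in polarCoord.target, W₂ p := hsplit
    _ = (-(2 * Real.pi) : ℝ) • ψ z := by rw [hD, hE, add_zero]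

/-- The Cauchy transform of a compactly supported C¹ function: a function with the
prescribed `∂̄` (up to constant) and controlled Lipschitz data. -/
lemma cauchy_transform (ψ : ℂ → ℂ) (hψ : ContDiff ℝ 1 ψ) (r' : ℝ) (hr' : 0 < r')
    (hvan : ∀ w : ℂ, r' ≤ ‖w‖ → ψ w = 0) (Mψ M' : ℝ)
    (hMψ : ∀ w, ‖ψ w‖ ≤ Mψ) (hM' : ∀ w, ‖fderiv ℝ ψ w‖ ≤ M') (s : ℝ) (hs : 0 < s) :
    ∃ (T : ℂ → ℂ) (T' : ℂ → (ℂ →L[ℝ] ℂ)),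
      (∀ z : ℂ, ‖z‖ < s → ‖T z‖ ≤ Mψ * (∫ η in closedBall (0:ℂ) (r' + s + 1), ‖η‖⁻¹)) ∧
      (∀ z : ℂ, ‖z‖ < s → HasFDerivAt T (T' z) z) ∧
      (∀ z : ℂ, ‖z‖ < s → ‖T' z‖ ≤ M' * (∫ η in closedBall (0:ℂ) (r' + s + 1), ‖η‖⁻¹)) ∧
      (∀ z : ℂ, ‖z‖ < s → T' z 1 + Complex.I * T' z Complex.I
        = ((-(2 * Real.pi)) : ℝ) • ψ z) := by
  have hdiff : ∀ w : ℂ, DifferentiableAt ℝ ψ w := fun w => (hψ.differentiable one_ne_zero) w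
  have hcont : Continuous (fderiv ℝ ψ) := hψ.continuous_fderiv one_ne_zero
  have hD0 : ∀ w : ℂ, r' < ‖w‖ → fderiv ℝ ψ w = 0 := by
    intro w hw
    have hopen : IsOpen {v : ℂ | r' < ‖v‖} := isOpen_lt continuous_const continuous_norm
    have hev : ψ =ᶠ[nhds w] (fun _ => (0:ℂ)) := by
      filter_upwards [hopen.mem_nhds hw] with v hv
      exact hvan v (le_of_lt hv)
    rw [hev.fderiv_eq, fderiv_const_apply]
  set R : ℝ := r' + s + 1 with hRdef
  have hR : 0 < R := by positivity
  set K : ℝ := ∫ η in closedBall (0:ℂ) R, ‖η‖⁻¹ with hKdef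
  have hK0 : 0 ≤ K := by
    apply setIntegral_nonneg measurableSet_closedBall
    intro η _
    positivity
  -- outside-ball vanishing facts
  have hout : ∀ (x η : ℂ), ‖x‖ < s + 1 → R < ‖η‖ → r' < ‖x + η‖ := by
    intro x η hx hη
    have h1 : ‖η‖ ≤ ‖x + η‖ + ‖x‖ := by
      have := norm_sub_le (x + η) x
      simpa using this
    rw [hRdef] at hη
    linarith
  set A : ℂ → (ℂ →L[ℝ] ℂ) := fun w => fderiv ℝ ψ w with hA
  set T : ℂ → ℂ := fun z => ∫ η : ℂ, ψ (z + η) * η⁻¹ with hT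
  set F' : ℂ → ℂ → (ℂ →L[ℝ] ℂ) := fun z η => η⁻¹ • A (z + η) with hF'
  -- the two dominating functions
  set bd1 : ℂ → ℝ := Set.indicator (closedBall (0:ℂ) R) (fun η => Mψ * ‖η‖⁻¹) with hbd1
  set bd2 : ℂ → ℝ := Set.indicator (closedBall (0:ℂ) R) (fun η => M' * ‖η‖⁻¹) with hbd2
  have hbd1int : Integrable bd1 volume := by
    rw [hbd1, integrable_indicator_iff measurableSet_closedBall]
    exact (kernel_integrable R).const_mul Mψ
  have hbd2int : Integrable bd2 volume := by
    rw [hbd2, integrable_indicator_iff measurableSet_closedBall]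
    exact (kernel_integrable R).const_mul M'
  have hMψ0 : 0 ≤ Mψ := le_trans (norm_nonneg _) (hMψ 0)
  have hM'0 : 0 ≤ M' := le_trans (norm_nonneg _) (hM' 0)
  have hmem : ∀ η : ℂ, η ∈ closedBall (0:ℂ) R ↔ ‖η‖ ≤ R := by
    intro η
    rw [mem_closedBall, Complex.dist_eq, sub_zero]
  -- measurability of the integrands
  have hFmeas : ∀ x : ℂ, AEStronglyMeasurable (fun η : ℂ => ψ (x + η) * η⁻¹) volume := by
    intro x
    apply Measurable.aestronglyMeasurable
    exact ((hψ.continuous.comp (continuous_const.add continuous_id)).measurable).mul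
      measurable_inv
  have hF'meas : ∀ z : ℂ, AEStronglyMeasurable (F' z) volume := by
    intro z
    rw [hF']
    apply AEStronglyMeasurable.smul (f := fun η : ℂ => η⁻¹) (g := fun η => A (z + η))
    · exact (measurable_inv).aestronglyMeasurable
    · exact (hcont.comp (continuous_const.add continuous_id)).aestronglyMeasurable
  -- integrability of F x for ‖x‖ < s+1
  have hFint : ∀ x : ℂ, ‖x‖ < s + 1 → Integrable (fun η : ℂ => ψ (x + η) * η⁻¹) volume := by
    intro x hx
    apply Integrable.mono' hbd1int (hFmeas x)
    apply Filter.Eventually.of_forall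
    intro η
    rcases le_or_gt ‖η‖ R with h | h
    · rw [hbd1, Set.indicator_of_mem ((hmem η).2 h)]
      rw [norm_mul, norm_inv]
      exact mul_le_mul_of_nonneg_right (hMψ _) (by positivity)
    · rw [hvan _ (le_of_lt (hout x η hx h)), hbd1,
        Set.indicator_of_notMem (fun hc => absurd ((hmem η).1 hc) (not_le.2 h))]
      simp
  -- integrability of F' z for ‖z‖ < s+1
  have hF'bd : ∀ (x η : ℂ), ‖x‖ < s + 1 → ‖F' x η‖ ≤ bd2 η := by
    intro x η hx
    rcases le_or_gt ‖η‖ R with h | h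
    · rw [hbd2, Set.indicator_of_mem ((hmem η).2 h)]
      show ‖η⁻¹ • A (x + η)‖ ≤ M' * ‖η‖⁻¹
      refine le_trans (ContinuousLinearMap.opNorm_smul_le _ _) ?_
      rw [norm_inv]
      calc ‖η‖⁻¹ * ‖A (x + η)‖ ≤ ‖η‖⁻¹ * M' :=
            mul_le_mul_of_nonneg_left (hM' _) (by positivity)
        _ = M' * ‖η‖⁻¹ := mul_comm _ _
    · have h0 := hD0 _ (hout x η hx h)
      have h1 : F' x η = 0 := by
        ext w'
        show (η⁻¹ • A (x + η)) w' = 0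
        rw [ContinuousLinearMap.smul_apply]
        have h2 : A (x + η) = 0 := h0
        rw [h2]
        simp
      rw [h1, hbd2, Set.indicator_of_notMem (fun hc => absurd ((hmem η).1 hc) (not_le.2 h))]
      simp
  have hF'int : ∀ z : ℂ, ‖z‖ < s + 1 → Integrable (F' z) volume := by
    intro z hz
    apply Integrable.mono' hbd2int (hF'meas z)
    exact Filter.Eventually.of_forall (fun η => hF'bd z η hz)
  -- differentiation under the integral sign
  have hTderiv : ∀ z : ℂ, ‖z‖ < s → HasFDerivAt T (∫ η : ℂ, F' z η) z := by
    intro z hz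
    apply hasFDerivAt_integral_of_dominated_of_fderiv_le (Metric.ball_mem_nhds z one_pos)
    · apply Filter.Eventually.of_forall
      intro x
      exact hFmeas x
    · exact hFint z (by linarith)
    · exact hF'meas z
    · apply Filter.Eventually.of_forall
      intro η x hxball
      apply hF'bd x η
      have := mem_ball_iff_norm.1 hxball
      calc ‖x‖ ≤ ‖x - z‖ + ‖z‖ := by
            have := norm_add_le (x - z) z
            simpa using this
        _ < s + 1 := by linarith
    · exact hbd2int
    · apply Filter.Eventually.of_forall
      intro η x _
      have h1 : HasFDerivAt (fun x : ℂ => ψ (x + η)) (A (x + η)) x := by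
        have h2 := ((hdiff (x + η)).hasFDerivAt).comp x ((hasFDerivAt_id x).add_const η)
        exact h2
      have h3 := h1.mul_const η⁻¹
      rw [hF']
      simpa using h3
  refine ⟨T, fun z => ∫ η : ℂ, F' z η, ?_, hTderiv, ?_, ?_⟩
  · -- sup bound for T
    intro z hz
    rw [hT]
    have hb : ∀ η : ℂ, ‖ψ (z + η) * η⁻¹‖ ≤ bd1 η := by
      intro η
      rcases le_or_gt ‖η‖ R with h | h
      · rw [hbd1, Set.indicator_of_mem ((hmem η).2 h)]
        rw [norm_mul, norm_inv]
        exact mul_le_mul_of_nonneg_right (hMψ _) (by positivity)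
      · rw [hvan _ (le_of_lt (hout z η (by linarith) h)), hbd1,
          Set.indicator_of_notMem (fun hc => absurd ((hmem η).1 hc) (not_le.2 h))]
        simp
    calc ‖∫ η : ℂ, ψ (z + η) * η⁻¹‖ ≤ ∫ η : ℂ, bd1 η :=
          norm_integral_le_of_norm_le hbd1int (Filter.Eventually.of_forall hb)
      _ = Mψ * K := by
          rw [hbd1, integral_indicator measurableSet_closedBall, hKdef, ← integral_const_mul]
  · -- norm bound for T'
    intro z hz
    calc ‖∫ η : ℂ, F' z η‖ ≤ ∫ η : ℂ, bd2 η :=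
          norm_integral_le_of_norm_le hbd2int
            (Filter.Eventually.of_forall (fun η => hF'bd z η (by linarith)))
      _ = M' * K := by
          rw [hbd2, integral_indicator measurableSet_closedBall, hKdef, ← integral_const_mul]
  · -- the ∂̄ computation via the Pompeiu formula
    intro z hz
    have hint := hF'int z (by linarith)
    have happ : ∀ v : ℂ, (∫ η : ℂ, F' z η) v = ∫ η : ℂ, η⁻¹ * (A (z + η) v) := by
      intro v
      rw [ContinuousLinearMap.integral_apply hint v]
      refine integral_congr_ae (Filter.Eventually.of_forall fun η => ?_)
      show (η⁻¹ • A (z + η)) v = η⁻¹ * (A (z + η)) v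
      rw [ContinuousLinearMap.smul_apply, smul_eq_mul]
    have hia : Integrable (fun η : ℂ => η⁻¹ * (A (z + η) 1)) volume := by
      have := hint.apply_continuousLinearMap (1 : ℂ)
      simpa [hF', smul_eq_mul] using this
    have hib : Integrable (fun η : ℂ => η⁻¹ * (A (z + η) Complex.I)) volume := by
      have := hint.apply_continuousLinearMap (Complex.I)
      simpa [hF', smul_eq_mul] using this
    rw [happ 1, happ Complex.I, ← integral_const_mul, ← integral_add hia (hib.const_mul _)]
    have hcongr : ∀ η : ℂ, η⁻¹ * (A (z + η) 1) + Complex.I * (η⁻¹ * (A (z + η) Complex.I))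
        = (fderiv ℝ ψ (z + η) 1 + Complex.I * fderiv ℝ ψ (z + η) Complex.I) * η⁻¹ := by
      intro η
      rw [hA]
      ring
    rw [integral_congr_ae (Filter.Eventually.of_forall hcongr)]
    exact pompeiu ψ hψ r' hr' hvan z

/-- An ℝ-linear map on ℂ satisfying the Cauchy–Riemann relation is multiplication. -/
lemma clinear_of_cr (A : ℂ →L[ℝ] ℂ) (h : A Complex.I = Complex.I * A 1) :
    ∀ v : ℂ, A v = v * A 1 := by
  intro v
  have hv : v = (v.re : ℝ) • (1:ℂ) + (v.im : ℝ) • Complex.I := by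
    simp [Complex.real_smul]
  calc A v = A ((v.re : ℝ) • (1:ℂ) + (v.im : ℝ) • Complex.I) := by rw [← hv]
    _ = (v.re : ℝ) • A 1 + (v.im : ℝ) • A Complex.I := by rw [A.map_add, A.map_smul, A.map_smul]
    _ = v * A 1 := by
        rw [h]
        simp only [Complex.real_smul]
        nth_rewrite 3 [← Complex.re_add_im v]
        ring

lemma hasDerivAt_of_cr {f : ℂ → ℂ} {z : ℂ} {A : ℂ →L[ℝ] ℂ} (hf : HasFDerivAt f A z)
    (h : A Complex.I = Complex.I * A 1) : HasDerivAt f (A 1) z := by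
  have hM : ContinuousLinearMap.restrictScalars ℝ
      ((1 : ℂ →L[ℂ] ℂ).smulRight (A 1)) = A := by
    ext v
    rw [ContinuousLinearMap.coe_restrictScalars']
    rw [ContinuousLinearMap.smulRight_apply]
    rw [ContinuousLinearMap.one_apply, smul_eq_mul]
    exact (clinear_of_cr A h v).symm
  have h2 := hasFDerivAt_of_restrictScalars ℝ hf hM
  exact hasDerivAt_iff_hasFDerivAt.2 h2

/-- Interior Lipschitz estimate for bounded holomorphic functions via the Schwarz lemma. -/
lemma lipschitz_of_bounded_holo {h : ℂ → ℂ} {ρ A : ℝ} (hρ : 0 < ρ)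
    (hd : DifferentiableOn ℂ h (ball (0:ℂ) (2*ρ)))
    (hb : ∀ z ∈ ball (0:ℂ) (2*ρ), ‖h z‖ ≤ A) :
    ∀ a ∈ ball (0:ℂ) ρ, ∀ b ∈ ball (0:ℂ) ρ,
      ‖h a - h b‖ ≤ ((2*A+1)/ρ) * ‖a - b‖ := by
  have hA0 : 0 ≤ A := le_trans (norm_nonneg _) (hb 0 (by simp [mem_ball]; positivity))
  have hderiv_bd : ∀ w ∈ ball (0:ℂ) ρ, ‖deriv h w‖ ≤ (2*A+1)/ρ := by
    intro w hw
    have hsub : ball w ρ ⊆ ball (0:ℂ) (2*ρ) := by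
      intro v hv
      rw [mem_ball] at hv ⊢
      have h1 : dist v 0 ≤ dist v w + dist w 0 := dist_triangle _ _ _
      rw [mem_ball] at hw
      linarith
    apply Complex.norm_deriv_le_div_of_mapsTo_ball (hd.mono hsub)
    · intro v hv
      rw [mem_closedBall]
      have h1 : ‖h v - h w‖ ≤ 2*A := by
        calc ‖h v - h w‖ ≤ ‖h v‖ + ‖h w‖ := norm_sub_le _ _
          _ ≤ A + A := add_le_add (hb v (hsub hv)) (hb w (hsub (mem_ball_self hρ)))
          _ = 2*A := by ring
      rw [dist_eq_norm]
      linarith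
    · exact hρ
  intro a ha b hb'
  have hdiffat : ∀ w ∈ ball (0:ℂ) ρ, HasFDerivWithinAt h
      ((1 : ℂ →L[ℂ] ℂ).smulRight (deriv h w)) (ball (0:ℂ) ρ) w := by
    intro w hw
    have h1 : DifferentiableAt ℂ h w := by
      apply hd.differentiableAt
      apply isOpen_ball.mem_nhds
      rw [mem_ball] at hw ⊢
      linarith
    exact (h1.hasDerivAt.hasFDerivAt).hasFDerivWithinAt
  have := Convex.norm_image_sub_le_of_norm_hasFDerivWithin_le
    (f := h) (f' := fun w => (1 : ℂ →L[ℂ] ℂ).smulRight (deriv h w))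
    (C := (2*A+1)/ρ) (s := ball (0:ℂ) ρ) hdiffat ?_ (convex_ball _ _) hb' ha
  · exact this
  · intro w hw
    rw [ContinuousLinearMap.norm_smulRight_apply, norm_one, one_mul]
    exact hderiv_bd w hw

/-- Core 1-D estimate: a bounded function on a disc whose `∂̄` equals a C¹ function with
controlled bounds is Lipschitz on a smaller disc, with constant depending only on the data. -/
lemma slice_lip (s C M : ℝ) (hs : 0 < s) (hC : 0 ≤ C) (hM : 0 ≤ M) :
    ∃ L : ℝ, 0 ≤ L ∧ ∀ (g φ : ℂ → ℂ),
      (∀ z : ℂ, ‖z‖ < s → ‖g z‖ ≤ C) →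
      (∀ z : ℂ, ‖z‖ < s → DifferentiableAt ℝ g z) →
      (∀ z : ℂ, ‖z‖ < s → fderiv ℝ g z 1 + Complex.I * fderiv ℝ g z Complex.I = 2 * φ z) →
      ContDiffOn ℝ 1 φ (ball (0:ℂ) s) →
      (∀ z : ℂ, ‖z‖ < s → ‖φ z‖ ≤ M) →
      (∀ z : ℂ, ‖z‖ < s → ‖fderiv ℝ φ z‖ ≤ M) →
      ∀ a b : ℂ, ‖a‖ < s/8 → ‖b‖ < s/8 → ‖g a - g b‖ ≤ L * ‖a - b‖ := by
  classical
  -- the bump function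
  set χ : ContDiffBump (0:ℂ) := ⟨s/2, 3*s/4, by positivity, by linarith⟩ with hχdef
  have hχrOut : χ.rOut = 3*s/4 := rfl
  have hχrIn : χ.rIn = s/2 := rfl
  have hχC : ContDiff ℝ 1 (χ : ℂ → ℝ) := χ.contDiff
  have hχfc : Continuous (fderiv ℝ (χ : ℂ → ℝ)) := hχC.continuous_fderiv one_ne_zero
  have hχ0 : ∀ z : ℂ, 3*s/4 < ‖z‖ → fderiv ℝ (χ : ℂ → ℝ) z = 0 := by
    intro z hz
    have hopen : IsOpen {v : ℂ | 3*s/4 < ‖v‖} := isOpen_lt continuous_const continuous_norm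
    have hev : (χ : ℂ → ℝ) =ᶠ[nhds z] (fun _ => (0:ℝ)) := by
      filter_upwards [hopen.mem_nhds hz] with v hv
      apply χ.zero_of_le_dist
      rw [hχrOut]
      simp only [dist_zero_right]
      exact le_of_lt hv
    rw [hev.fderiv_eq, fderiv_const_apply]
  obtain ⟨Kχ, hKχ0, hKχ⟩ : ∃ Kχ : ℝ, 0 ≤ Kχ ∧ ∀ z : ℂ, ‖fderiv ℝ (χ : ℂ → ℝ) z‖ ≤ Kχ := by
    obtain ⟨B, hB⟩ := (isCompact_closedBall (0:ℂ) (3*s/4)).exists_bound_of_continuousOn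
      hχfc.continuousOn
    refine ⟨max B 0, le_max_right _ _, fun z => ?_⟩
    rcases le_or_gt ‖z‖ (3*s/4) with h | h
    · refine le_trans (hB z ?_) (le_max_left _ _)
      simpa [mem_closedBall, dist_zero_right] using h
    · rw [hχ0 z h]
      simp
  -- the kernel constant
  set K : ℝ := ∫ η in closedBall (0:ℂ) (3*s/4 + s + 1), ‖η‖⁻¹ with hKdef
  have hK0 : 0 ≤ K := by
    apply setIntegral_nonneg measurableSet_closedBall
    intro η _
    positivity
  -- the derived constants
  set M' : ℝ := Kχ * M + M with hM'def
  have hM'0 : 0 ≤ M' := by positivity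
  set A : ℝ := C + Real.pi⁻¹ * (M * K) with hAdef
  have hA0 : 0 ≤ A := by
    have := Real.pi_pos
    positivity
  set Lh : ℝ := (2*A+1)/(s/4) with hLhdef
  have hLh0 : 0 ≤ Lh := by positivity
  refine ⟨Lh + Real.pi⁻¹ * (M' * K), by positivity, ?_⟩
  intro g φ hgb hgd hgcr hφC hφb hφ'
  -- the cut-off version of φ
  set ψ : ℂ → ℂ := fun z => (χ z : ℝ) • φ z with hψdef
  have hψvan : ∀ w : ℂ, 3*s/4 ≤ ‖w‖ → ψ w = 0 := by
    intro w hw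
    have h1 : (χ w : ℝ) = 0 := by
      apply χ.zero_of_le_dist
      rw [hχrOut]
      simpa [dist_zero_right] using hw
    rw [hψdef]
    simp only [h1, zero_smul]
  have hψ1 : ∀ w : ℂ, ‖w‖ ≤ s/2 → ψ w = φ w := by
    intro w hw
    have h1 : (χ w : ℝ) = 1 := by
      apply χ.one_of_mem_closedBall
      rw [mem_closedBall, dist_zero_right, hχrIn]
      exact hw
    rw [hψdef]
    simp only [h1, one_smul]
  have hψC1 : ContDiff ℝ 1 ψ := by
    rw [contDiff_iff_contDiffAt]
    intro z
    rcases lt_or_ge ‖z‖ s with hz | hz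
    · apply ContDiffAt.smul hχC.contDiffAt
      exact hφC.contDiffAt (isOpen_ball.mem_nhds (by simpa [mem_ball, dist_zero_right] using hz))
    · have hopen : IsOpen {v : ℂ | 3*s/4 < ‖v‖} := isOpen_lt continuous_const continuous_norm
      have hzin : z ∈ {v : ℂ | 3*s/4 < ‖v‖} := by
        simp only [mem_setOf_eq]
        linarith
      apply ContDiffAt.congr_of_eventuallyEq (contDiffAt_const (c := (0:ℂ)))
      filter_upwards [hopen.mem_nhds hzin] with v hv
      exact hψvan v (le_of_lt hv)
  have hψb : ∀ w : ℂ, ‖ψ w‖ ≤ M := by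
    intro w
    rcases lt_or_ge ‖w‖ s with h | h
    · rw [hψdef]
      simp only []
      rw [norm_smul]
      calc ‖(χ w : ℝ)‖ * ‖φ w‖ ≤ 1 * M := by
            apply mul_le_mul ?_ (hφb w h) (norm_nonneg _) zero_le_one
            rw [Real.norm_eq_abs, _root_.abs_of_nonneg χ.nonneg]
            exact χ.le_one
        _ = M := one_mul M
    · rw [hψvan w (by linarith)]
      simpa using hM
  have hψd : ∀ w : ℂ, ‖w‖ < s → DifferentiableAt ℝ φ w := by
    intro w hw
    exact (hφC.contDiffAt (isOpen_ball.mem_nhds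
      (by simpa [mem_ball, dist_zero_right] using hw))).differentiableAt one_ne_zero
  have hψ' : ∀ w : ℂ, ‖fderiv ℝ ψ w‖ ≤ M' := by
    intro w
    rcases lt_or_ge ‖w‖ s with h | h
    · have hd1 : DifferentiableAt ℝ (χ : ℂ → ℝ) w := hχC.differentiable one_ne_zero |>.differentiableAt
      have hd2 : DifferentiableAt ℝ φ w := hψd w h
      rw [hψdef]
      rw [fderiv_fun_smul hd1 hd2]
      calc ‖(χ w : ℝ) • fderiv ℝ φ w + (fderiv ℝ (χ : ℂ → ℝ) w).smulRight (φ w)‖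
          ≤ ‖(χ w : ℝ) • fderiv ℝ φ w‖ + ‖(fderiv ℝ (χ : ℂ → ℝ) w).smulRight (φ w)‖ :=
            norm_add_le _ _
        _ ≤ M + Kχ * M := by
            apply add_le_add
            · rw [norm_smul]
              calc ‖(χ w : ℝ)‖ * ‖fderiv ℝ φ w‖ ≤ 1 * M := by
                    apply mul_le_mul ?_ (hφ' w h) (norm_nonneg _) zero_le_one
                    rw [Real.norm_eq_abs, _root_.abs_of_nonneg χ.nonneg]
                    exact χ.le_one
                _ = M := one_mul M
            · rw [ContinuousLinearMap.norm_smulRight_apply]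
              exact mul_le_mul (hKχ w) (hφb w h) (norm_nonneg _) hKχ0
        _ = M' := by rw [hM'def]; ring
    · have hopen : IsOpen {v : ℂ | 3*s/4 < ‖v‖} := isOpen_lt continuous_const continuous_norm
      have hzin : w ∈ {v : ℂ | 3*s/4 < ‖v‖} := by
        simp only [mem_setOf_eq]; linarith
      have hev : ψ =ᶠ[nhds w] (fun _ => (0:ℂ)) := by
        filter_upwards [hopen.mem_nhds hzin] with v hv
        exact hψvan v (le_of_lt hv)
      rw [hev.fderiv_eq, fderiv_const_apply]
      simpa using hM'0
  -- the Cauchy transform of ψ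
  obtain ⟨T, T', hTb, hTd, hT'b, hTcr⟩ := cauchy_transform ψ hψC1 (3*s/4) (by positivity)
    hψvan M M' hψb hψ' s hs
  -- the holomorphic part
  set h : ℂ → ℂ := fun z => g z + Real.pi⁻¹ • T z with hhdef
  have hπ : (0:ℝ) < Real.pi := Real.pi_pos
  have hhb : ∀ z ∈ ball (0:ℂ) (2*(s/4)), ‖h z‖ ≤ A := by
    intro z hz
    rw [mem_ball, dist_zero_right] at hz
    have hzs : ‖z‖ < s := by linarith
    rw [hhdef]
    calc ‖g z + Real.pi⁻¹ • T z‖ ≤ ‖g z‖ + ‖Real.pi⁻¹ • T z‖ := norm_add_le _ _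
      _ ≤ C + Real.pi⁻¹ * (M * K) := by
          apply add_le_add (hgb z hzs)
          rw [norm_smul, Real.norm_eq_abs, _root_.abs_of_nonneg (by positivity : (0:ℝ) ≤ Real.pi⁻¹)]
          exact mul_le_mul_of_nonneg_left (hTb z hzs) (by positivity)
      _ = A := hAdef.symm
  have hhd : DifferentiableOn ℂ h (ball (0:ℂ) (2*(s/4))) := by
    intro z hz
    rw [mem_ball, dist_zero_right] at hz
    have hzs2 : ‖z‖ < s/2 := by linarith
    have hzs : ‖z‖ < s := by linarith
    -- real derivative of h
    have hgfd : HasFDerivAt g (fderiv ℝ g z) z := (hgd z hzs).hasFDerivAt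
    have hhfd : HasFDerivAt h (fderiv ℝ g z + Real.pi⁻¹ • T' z) z := by
      rw [hhdef]
      exact hgfd.add ((hTd z hzs).const_smul Real.pi⁻¹)
    -- Cauchy-Riemann for the combined derivative
    set B : ℂ →L[ℝ] ℂ := fderiv ℝ g z + Real.pi⁻¹ • T' z with hBdef
    have hB0 : B 1 + Complex.I * B Complex.I = 0 := by
      have h1 : B 1 = fderiv ℝ g z 1 + Real.pi⁻¹ • T' z 1 := by
        rw [hBdef]
        simp [ContinuousLinearMap.add_apply, ContinuousLinearMap.smul_apply]
      have h2 : B Complex.I = fderiv ℝ g z Complex.I + Real.pi⁻¹ • T' z Complex.I := by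
        rw [hBdef]
        simp [ContinuousLinearMap.add_apply, ContinuousLinearMap.smul_apply]
      have h3 := hgcr z hzs
      have h4 := hTcr z hzs
      have h5 : ψ z = φ z := hψ1 z (le_of_lt hzs2)
      rw [h1, h2]
      have hexp : (fderiv ℝ g z 1 + Real.pi⁻¹ • T' z 1) +
          Complex.I * (fderiv ℝ g z Complex.I + Real.pi⁻¹ • T' z Complex.I)
          = (fderiv ℝ g z 1 + Complex.I * fderiv ℝ g z Complex.I)
            + Real.pi⁻¹ • (T' z 1 + Complex.I * T' z Complex.I) := by
        simp only [Complex.real_smul]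
        ring
      rw [hexp, h3, h4, h5]
      simp only [Complex.real_smul]
      push_cast
      have : (Real.pi : ℂ) ≠ 0 := Complex.ofReal_ne_zero.2 (ne_of_gt hπ)
      field_simp
      ring
    have hcr : B Complex.I = Complex.I * B 1 := by
      linear_combination (-Complex.I) * hB0 + (B Complex.I) * Complex.I_sq
    exact (hasDerivAt_of_cr hhfd hcr).differentiableAt.differentiableWithinAt
  -- Lipschitz estimate for the holomorphic part
  have hlip := lipschitz_of_bounded_holo (ρ := s/4) (by positivity) hhd hhb
  intro a b ha hb
  have ha4 : a ∈ ball (0:ℂ) (s/4) := by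
    rw [mem_ball, dist_zero_right]
    linarith
  have hb4 : b ∈ ball (0:ℂ) (s/4) := by
    rw [mem_ball, dist_zero_right]
    linarith
  -- Lipschitz estimate for the transform T
  have hTlip : ‖T a - T b‖ ≤ (M' * K) * ‖a - b‖ := by
    apply Convex.norm_image_sub_le_of_norm_hasFDerivWithin_le (𝕜 := ℝ)
      (f' := T') ?_ ?_ (convex_ball _ _) hb4 ha4
    · intro w hw
      rw [mem_ball, dist_zero_right] at hw
      exact (hTd w (by linarith)).hasFDerivWithinAt
    · intro w hw
      rw [mem_ball, dist_zero_right] at hw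
      exact hT'b w (by linarith)
  have hgdiff : g a - g b = (h a - h b) - Real.pi⁻¹ • (T a - T b) := by
    simp only [hhdef, smul_sub]
    abel
  rw [hgdiff]
  calc ‖(h a - h b) - Real.pi⁻¹ • (T a - T b)‖
      ≤ ‖h a - h b‖ + ‖Real.pi⁻¹ • (T a - T b)‖ := norm_sub_le _ _
    _ ≤ Lh * ‖a - b‖ + Real.pi⁻¹ * ((M' * K) * ‖a - b‖) := by
        apply add_le_add
        · exact hlip a ha4 b hb4
        · rw [norm_smul, Real.norm_eq_abs, _root_.abs_of_nonneg (by positivity : (0:ℝ) ≤ Real.pi⁻¹)]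
          exact mul_le_mul_of_nonneg_left hTlip (by positivity)
    _ = (Lh + Real.pi⁻¹ * (M' * K)) * ‖a - b‖ := by ring

/-- Let `X` be a complex Banach space, `f` a `∂̄`-closed `(0,1)`-form of class
`C^m` (`m ≥ 1`) with finite `C^m` norm on the unit ball `B`. Suppose `u_n` are continuous on
`B`, with `sup_B |u_n|` and the sup-norms of `∂̄u_n` uniformly bounded, and `∂̄u_n = f` on
`B ∩ E_n` for an increasing exhausting sequence of finite dimensional subspaces
`E_n = range ρ_n`, where `ρ_n` are norm-one projections tending pointwise to the identity.
Then the family `(u_n ∘ ρ_n)` is (locally) equicontinuous on `B`. -/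
theorem equicontinuity_of_dbar_solutions
    (X : Type*) [NormedAddCommGroup X] [NormedSpace ℂ X] [CompleteSpace X]
    (m : ℕ) (hm : 1 ≤ m)
    (f : X → (X →L[ℝ] ℂ))
    -- `f` is a `(0,1)`-form: its values are conjugate-linear
    (hf01 : ∀ x ∈ Metric.ball (0 : X) 1, ∀ ξ : X,
      f x (Complex.I • ξ) = -Complex.I * f x ξ)
    -- `f` is of class `C^m` with finite `C^m` norm on `B`
    (hfC : ContDiffOn ℝ m f (Metric.ball (0 : X) 1))
    (hfnorm : ∃ Mf : ℝ, ∀ j ≤ m, ∀ x ∈ Metric.ball (0 : X) 1,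
      ‖iteratedFDerivWithin ℝ j f (Metric.ball (0 : X) 1) x‖ ≤ Mf)
    -- `f` is `∂̄`-closed
    (hfcl : ∀ x ∈ Metric.ball (0 : X) 1, ∀ ξ η : X,
      (fderiv ℝ f x ξ) η + Complex.I * (fderiv ℝ f x (Complex.I • ξ)) η =
      (fderiv ℝ f x η) ξ + Complex.I * (fderiv ℝ f x (Complex.I • η)) ξ)
    (u : ℕ → X → ℂ)
    (hu : ∀ n, ContinuousOn (u n) (Metric.ball (0 : X) 1))
    (hudiff : ∀ n, DifferentiableOn ℝ (u n) (Metric.ball (0 : X) 1))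
    (C : ℝ)
    (hubdd : ∀ n, ∀ x ∈ Metric.ball (0 : X) 1, ‖u n x‖ ≤ C)
    (hdbarbdd : ∀ n, ∀ x ∈ Metric.ball (0 : X) 1, ∀ ξ : X,
      ‖(1/2 : ℂ) * (fderiv ℝ (u n) x ξ +
        Complex.I * fderiv ℝ (u n) x (Complex.I • ξ))‖ ≤ C * ‖ξ‖)
    (ρ : ℕ → X →L[ℂ] X)
    (hρnorm : ∀ n, ‖ρ n‖ ≤ 1)
    (hρproj : ∀ n x, ρ n (ρ n x) = ρ n x)
    (hρfin : ∀ n, FiniteDimensional ℂ (LinearMap.range (ρ n : X →ₗ[ℂ] X)))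
    (hρmono : ∀ n, Set.range (ρ n) ⊆ Set.range (ρ (n+1)))
    (hρlim : ∀ x : X, Tendsto (fun n => ρ n x) atTop (𝓝 x))
    -- `∂̄ u_n = f` on `B ∩ E_n`
    (hsol : ∀ n, ∀ x ∈ Metric.ball (0 : X) 1, x ∈ Set.range (ρ n) → ∀ ξ : X,
      (1/2 : ℂ) * (fderiv ℝ (u n) x ξ +
        Complex.I * fderiv ℝ (u n) x (Complex.I • ξ)) = f x ξ) :
    EquicontinuousOn (fun n => (u n) ∘ (ρ n)) (Metric.ball (0 : X) 1) := by
  obtain ⟨Mf, hMf⟩ := hfnorm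
  have hC0 : 0 ≤ C := by
    have h1 := hubdd 0 0 (by simp [Metric.mem_ball])
    exact le_trans (norm_nonneg _) h1
  intro x0 hx0
  rw [Metric.mem_ball, dist_zero_right] at hx0
  set s : ℝ := (1 - ‖x0‖)/2 with hsdef
  have hs : 0 < s := by
    rw [hsdef]
    have := norm_nonneg x0
    linarith
  set r : ℝ := ‖x0‖ + s with hrdef
  have hrs : r + s = 1 := by rw [hrdef, hsdef]; ring
  set M : ℝ := max Mf 0 with hMdef
  have hM0 : 0 ≤ M := le_max_right _ _
  have hMfM : Mf ≤ M := le_max_left _ _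
  obtain ⟨L, hL0, hL⟩ := slice_lip s C M hs hC0 hM0
  -- bounds on f
  have hfb : ∀ x ∈ Metric.ball (0:X) 1, ‖f x‖ ≤ M := by
    intro x hx
    have h1 := hMf 0 (Nat.zero_le m) x hx
    rw [norm_iteratedFDerivWithin_zero] at h1
    exact le_trans h1 hMfM
  have hm1 : (1 : WithTop ℕ∞) ≤ (m : WithTop ℕ∞) := by exact_mod_cast hm
  have hfd : ∀ x ∈ Metric.ball (0:X) 1, DifferentiableAt ℝ f x := by
    intro x hx
    exact ((hfC.contDiffAt (Metric.isOpen_ball.mem_nhds hx)).differentiableAt (by exact_mod_cast (by omega : m ≠ 0)))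
  have hfd' : ∀ x ∈ Metric.ball (0:X) 1, ‖fderiv ℝ f x‖ ≤ M := by
    intro x hx
    apply ContinuousLinearMap.opNorm_le_bound _ hM0
    intro v
    have h2 : fderiv ℝ f x v = fderivWithin ℝ f (Metric.ball (0:X) 1) x v := by
      rw [fderivWithin_of_isOpen Metric.isOpen_ball hx]
    have h3 : fderivWithin ℝ f (Metric.ball (0:X) 1) x v
        = iteratedFDerivWithin ℝ 1 f (Metric.ball (0:X) 1) x (fun _ => v) := by
      rw [iteratedFDerivWithin_one_apply (Metric.isOpen_ball.uniqueDiffWithinAt hx)]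
    rw [h2, h3]
    calc ‖iteratedFDerivWithin ℝ 1 f (Metric.ball (0:X) 1) x (fun _ => v)‖
        ≤ ‖iteratedFDerivWithin ℝ 1 f (Metric.ball (0:X) 1) x‖ * ∏ _i : Fin 1, ‖v‖ :=
          ContinuousMultilinearMap.le_opNorm _ _
      _ ≤ M * ‖v‖ := by
          simp only [Finset.prod_const, Finset.card_univ, Fintype.card_fin, pow_one]
          exact mul_le_mul_of_nonneg_right (le_trans (hMf 1 hm x hx) hMfM) (norm_nonneg v)
  -- the key uniform Lipschitz estimate
  have key : ∀ n : ℕ, ∀ x : X, ‖x - x0‖ < s/8 →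
      ‖u n (ρ n x) - u n (ρ n x0)‖ ≤ L * ‖x - x0‖ := by
    intro n x hx
    set p := ρ n x0 with hpdef
    set q := ρ n x with hqdef
    have hρle : ∀ y : X, ‖ρ n y‖ ≤ ‖y‖ := by
      intro y
      calc ‖ρ n y‖ ≤ ‖ρ n‖ * ‖y‖ := (ρ n).le_opNorm y
        _ ≤ 1 * ‖y‖ := mul_le_mul_of_nonneg_right (hρnorm n) (norm_nonneg _)
        _ = ‖y‖ := one_mul _
    have hpnorm : ‖p‖ < r := by
      calc ‖p‖ ≤ ‖x0‖ := hρle x0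
        _ < r := by rw [hrdef]; linarith
    have hqnorm : ‖q‖ < r := by
      have h1 : ‖x‖ ≤ ‖x - x0‖ + ‖x0‖ := by
        have := norm_add_le (x - x0) x0
        simpa [sub_add_cancel] using this
      calc ‖q‖ ≤ ‖x‖ := hρle x
        _ < r := by rw [hrdef]; linarith
    rcases eq_or_ne q p with heq | hne
    · rw [heq, sub_self, norm_zero]
      positivity
    · set t : ℝ := ‖q - p‖ with htdef
      have ht0 : 0 < t := by
        rw [htdef, norm_pos_iff]
        exact sub_ne_zero.2 hne
      have htC : ((t:ℂ)) ≠ 0 := Complex.ofReal_ne_zero.2 (ne_of_gt ht0)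
      set e : X := ((t:ℂ))⁻¹ • (q - p) with hedef
      have he : ‖e‖ = 1 := by
        rw [hedef, norm_smul, norm_inv, Complex.norm_real, Real.norm_eq_abs,
          _root_.abs_of_pos ht0, ← htdef]
        field_simp
      have htle : t ≤ ‖x - x0‖ := by
        have h1 : q - p = ρ n (x - x0) := by rw [hqdef, hpdef, map_sub]
        rw [htdef, h1]
        exact hρle _
      have ht8 : t < s/8 := lt_of_le_of_lt htle hx
      -- the affine slice
      set E1 : ℂ →L[ℝ] X := (((ContinuousLinearMap.id ℂ ℂ).smulRight e).restrictScalars ℝ)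
        with hE1def
      have hE1app : ∀ ζ : ℂ, E1 ζ = ζ • e := by
        intro ζ
        rw [hE1def]
        simp
      have hE1norm : ‖E1‖ ≤ 1 := by
        apply ContinuousLinearMap.opNorm_le_bound _ zero_le_one
        intro v
        rw [hE1app, norm_smul, he, one_mul, mul_one]
      set aff : ℂ → X := fun ζ => p + ζ • e with haffdef
      have haffeq : aff = fun ζ : ℂ => p + E1 ζ := by
        funext v
        show p + v • e = p + E1 v
        rw [hE1app]
      have haffd : ∀ ζ : ℂ, HasFDerivAt aff E1 ζ := by
        intro ζ
        rw [haffeq]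
        exact (E1.hasFDerivAt (x := ζ)).const_add p
      have hmemball : ∀ ζ : ℂ, ‖ζ‖ < s → aff ζ ∈ Metric.ball (0:X) 1 := by
        intro ζ hζ
        rw [Metric.mem_ball, dist_zero_right, haffdef]
        calc ‖p + ζ • e‖ ≤ ‖p‖ + ‖ζ • e‖ := norm_add_le _ _
          _ = ‖p‖ + ‖ζ‖ := by rw [norm_smul, he, mul_one]
          _ < r + s := by linarith
          _ = 1 := hrs
      have hrange : ∀ ζ : ℂ, aff ζ ∈ Set.range (ρ n) := by
        intro ζ
        refine ⟨aff ζ, ?_⟩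
        have hρe : ρ n e = e := by
          rw [hedef, (ρ n).map_smul, (ρ n).map_sub]
          rw [hpdef, hqdef, hρproj, hρproj]
        have hρp : ρ n p = p := by rw [hpdef, hρproj]
        show ρ n (p + ζ • e) = p + ζ • e
        rw [map_add, (ρ n).map_smul, hρe, hρp]
      -- the slice functions
      set gg : ℂ → ℂ := fun ζ => u n (aff ζ) with hggdef
      set φφ : ℂ → ℂ := fun ζ => f (aff ζ) e with hφφdef
      have hudiffat : ∀ ζ : ℂ, ‖ζ‖ < s → DifferentiableAt ℝ (u n) (aff ζ) := by
        intro ζ hζ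
        exact (hudiff n).differentiableAt (Metric.isOpen_ball.mem_nhds (hmemball ζ hζ))
      have hggd : ∀ ζ : ℂ, ‖ζ‖ < s → DifferentiableAt ℝ gg ζ := by
        intro ζ hζ
        exact (hudiffat ζ hζ).comp ζ (haffd ζ).differentiableAt
      have hggfd : ∀ ζ : ℂ, ‖ζ‖ < s →
          fderiv ℝ gg ζ = (fderiv ℝ (u n) (aff ζ)).comp E1 := by
        intro ζ hζ
        exact (((hudiffat ζ hζ).hasFDerivAt).comp ζ (haffd ζ)).fderiv
      have hggb : ∀ ζ : ℂ, ‖ζ‖ < s → ‖gg ζ‖ ≤ C := by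
        intro ζ hζ
        have h1 := hubdd n (aff ζ) (hmemball ζ hζ)
        exact h1
      have hggcr : ∀ ζ : ℂ, ‖ζ‖ < s →
          fderiv ℝ gg ζ 1 + Complex.I * fderiv ℝ gg ζ Complex.I = 2 * φφ ζ := by
        intro ζ hζ
        rw [hggfd ζ hζ]
        have h1 := hsol n (aff ζ) (hmemball ζ hζ) (hrange ζ) e
        have h2 : E1 (1:ℂ) = e := by rw [hE1app, one_smul]
        have h3 : E1 Complex.I = Complex.I • e := by rw [hE1app]
        rw [ContinuousLinearMap.comp_apply, ContinuousLinearMap.comp_apply, h2, h3]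
        rw [hφφdef]
        linear_combination 2 * h1
      have hφφC : ContDiffOn ℝ 1 φφ (ball (0:ℂ) s) := by
        have haffC : ContDiff ℝ 1 aff := by
          rw [haffeq]
          exact (contDiff_const (c := p)).add E1.contDiff
        have hmaps : Set.MapsTo aff (ball (0:ℂ) s) (Metric.ball (0:X) 1) := by
          intro ζ hζ
          rw [mem_ball, dist_zero_right] at hζ
          exact hmemball ζ hζ
        have hcomp : ContDiffOn ℝ 1 (f ∘ aff) (ball (0:ℂ) s) :=
          ContDiffOn.comp (hfC.of_le hm1) haffC.contDiffOn hmaps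
        have happ := (ContinuousLinearMap.apply ℝ ℂ e).contDiff (n := 1)
        exact happ.comp_contDiffOn hcomp
      have hφφb : ∀ ζ : ℂ, ‖ζ‖ < s → ‖φφ ζ‖ ≤ M := by
        intro ζ hζ
        rw [hφφdef]
        calc ‖f (aff ζ) e‖ ≤ ‖f (aff ζ)‖ * ‖e‖ := (f (aff ζ)).le_opNorm e
          _ ≤ M := by rw [he, mul_one]; exact hfb _ (hmemball ζ hζ)
      have hφφ' : ∀ ζ : ℂ, ‖ζ‖ < s → ‖fderiv ℝ φφ ζ‖ ≤ M := by
        intro ζ hζ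
        set Ae : (X →L[ℝ] ℂ) →L[ℝ] ℂ := ContinuousLinearMap.apply ℝ ℂ e with hAedef
        have hAen : ‖Ae‖ ≤ 1 := by
          apply ContinuousLinearMap.opNorm_le_bound _ zero_le_one
          intro B
          rw [one_mul]
          calc ‖Ae B‖ = ‖B e‖ := rfl
            _ ≤ ‖B‖ * ‖e‖ := B.le_opNorm e
            _ = ‖B‖ := by rw [he, mul_one]
        have hfad : HasFDerivAt (f ∘ aff) ((fderiv ℝ f (aff ζ)).comp E1) ζ :=
          ((hfd (aff ζ) (hmemball ζ hζ)).hasFDerivAt).comp ζ (haffd ζ)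
        have hφd : HasFDerivAt φφ (Ae.comp ((fderiv ℝ f (aff ζ)).comp E1)) ζ := by
          have h1 := (Ae.hasFDerivAt (x := (f ∘ aff) ζ)).comp ζ hfad
          apply h1.congr_of_eventuallyEq
          apply Filter.Eventually.of_forall
          intro v
          rfl
        rw [hφd.fderiv]
        calc ‖Ae.comp ((fderiv ℝ f (aff ζ)).comp E1)‖
            ≤ ‖Ae‖ * ‖(fderiv ℝ f (aff ζ)).comp E1‖ := ContinuousLinearMap.opNorm_comp_le _ _
          _ ≤ 1 * (‖fderiv ℝ f (aff ζ)‖ * ‖E1‖) := by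
              apply mul_le_mul hAen (ContinuousLinearMap.opNorm_comp_le _ _) (norm_nonneg _)
                zero_le_one
          _ ≤ 1 * (M * 1) := by
              apply mul_le_mul_of_nonneg_left ?_ zero_le_one
              exact mul_le_mul (hfd' _ (hmemball ζ hζ)) hE1norm (norm_nonneg _) hM0
          _ = M := by ring
      -- apply the core estimate
      have hkey := hL gg φφ hggb hggd hggcr hφφC hφφb hφφ' (0:ℂ) ((t:ℂ))
        (by simpa using (by positivity : (0:ℝ) < s/8))
        (by rw [Complex.norm_real, Real.norm_eq_abs, _root_.abs_of_pos ht0]; exact ht8)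
      have hg0 : gg 0 = u n p := by
        show u n (p + (0:ℂ) • e) = u n p
        rw [zero_smul, add_zero]
      have hgt : gg ((t:ℂ)) = u n q := by
        have h1 : p + ((t:ℂ)) • e = q := by
          rw [hedef, smul_smul, mul_inv_cancel₀ htC, one_smul]
          abel
        show u n (p + ((t:ℂ)) • e) = u n q
        exact congrArg (u n) h1
      calc ‖u n q - u n p‖ = ‖gg 0 - gg ((t:ℂ))‖ := by rw [hg0, hgt, norm_sub_rev]
        _ ≤ L * ‖(0:ℂ) - ((t:ℂ))‖ := hkey
        _ = L * t := by
            rw [zero_sub, norm_neg, Complex.norm_real, Real.norm_eq_abs, _root_.abs_of_pos ht0]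
        _ ≤ L * ‖x - x0‖ := mul_le_mul_of_nonneg_left htle hL0
  -- conclude equicontinuity at x0
  intro U hU
  obtain ⟨ε, hε, hsub⟩ := Metric.mem_uniformity_dist.1 hU
  have hδ : 0 < min (s/8) (ε/(L+1)) := by positivity
  have hballmem : Metric.ball x0 (min (s/8) (ε/(L+1))) ∈ 𝓝[Metric.ball (0:X) 1] x0 :=
    nhdsWithin_le_nhds (Metric.ball_mem_nhds x0 hδ)
  filter_upwards [hballmem] with x hx n
  apply hsub
  rw [Metric.mem_ball] at hx
  have hxs : ‖x - x0‖ < s/8 := by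
    rw [← dist_eq_norm]
    exact lt_of_lt_of_le hx (min_le_left _ _)
  have h1 := key n x hxs
  have h2 : dist ((u n ∘ ρ n) x0) ((u n ∘ ρ n) x) < ε := by
    rw [Function.comp_apply, Function.comp_apply, dist_eq_norm, norm_sub_rev]
    calc ‖u n (ρ n x) - u n (ρ n x0)‖ ≤ L * ‖x - x0‖ := h1
      _ ≤ L * (ε/(L+1)) := by
          apply mul_le_mul_of_nonneg_left ?_ hL0
          rw [← dist_eq_norm]
          exact le_of_lt (lt_of_lt_of_le hx (min_le_right _ _))
      _ < ε := by
          rw [div_eq_inv_mul, ← mul_assoc]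
          have h3 : L * (L+1)⁻¹ < 1 := by
            rw [mul_inv_lt_iff₀ (by linarith)]
            linarith
          calc L * (L+1)⁻¹ * ε < 1 * ε := by
                apply mul_lt_mul_of_pos_right h3 hε
            _ = ε := one_mul ε
  exact h2
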